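/- (Corollary 1.1: maximal cliques have exactly three elements) There do not exist four pairs x, y, z, w ∈ ℤ × ℤ that are pairwise distant, i.e. with |det| equal to 1 for all six pairs among them. Moreover, every distant pair extends to a triangle: if x, y are distant unimodular pairs, then x + y is unimodular and distant from both x and y. -/

import Mathlib

/-- The determinant of two integer vectors in the plane. -/
def det (x y : ℤ × ℤ) : ℤ := x.1 * y.2 - x.2 * y.1

lemma pluecker (x y z w : ℤ × ℤ) :
    det x y * det z w - det x z * det y w + det x w * det y z = 0 := by
  simp only [det]; ring

/-- Corollary 1.1: maximal cliques of the distant relation have exactly three elements.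
There are no four pairwise distant points, and every distant pair `x, y` extends to a
triangle by the unimodular pair `x + y`. -/
theorem maximal_cliques_have_three_elements :
    (¬ ∃ x y z w : ℤ × ℤ, |det x y| = 1 ∧ |det x z| = 1 ∧ |det x w| = 1 ∧
        |det y z| = 1 ∧ |det y w| = 1 ∧ |det z w| = 1) ∧
    (∀ x y : ℤ × ℤ, Int.gcd x.1 x.2 = 1 → Int.gcd y.1 y.2 = 1 → |det x y| = 1 →
        Int.gcd (x + y).1 (x + y).2 = 1 ∧ |det x (x + y)| = 1 ∧ |det y (x + y)| = 1) := by
  constructor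
  · rintro ⟨x, y, z, w, h1, h2, h3, h4, h5, h6⟩
    have hp := pluecker x y z w
    rw [abs_eq (by norm_num : (0:ℤ) ≤ 1)] at h1 h2 h3 h4 h5 h6
    rcases h1 with h1 | h1 <;> rcases h2 with h2 | h2 <;> rcases h3 with h3 | h3 <;>
      rcases h4 with h4 | h4 <;> rcases h5 with h5 | h5 <;> rcases h6 with h6 | h6 <;>
      rw [h1, h2, h3, h4, h5, h6] at hp <;> norm_num at hp
  · intro x y hx hy hxy
    have hdx : det x (x + y) = det x y := by simp only [det, Prod.fst_add, Prod.snd_add]; ring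
    have hdy : det y (x + y) = -det x y := by simp only [det, Prod.fst_add, Prod.snd_add]; ring
    refine ⟨?_, by rw [hdx]; exact hxy, by rw [hdy, abs_neg]; exact hxy⟩
    rw [← Int.isCoprime_iff_gcd_eq_one]
    rcases (abs_eq (by norm_num : (0:ℤ) ≤ 1)).mp hxy with h | h
    · exact ⟨-x.2, x.1, by simp only [det, Prod.fst_add, Prod.snd_add] at *; linarith⟩
    · exact ⟨x.2, -x.1, by simp only [det, Prod.fst_add, Prod.snd_add] at *; linarith⟩
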